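/- The Poincaré maps Q̄^i and Q^i of the linearized mosquito system, acting on the history spaces ℝ × C([−τ̄^i,0],ℝ) and ℝ × C([−τ_l^i(0),0],ℝ) respectively, have the same spectral radius: r(Q̄^i) = r(Q^i), and this common value is finite. -/

import Mathlib

open MeasureTheory Set

/-!
STATEMENT 8: The Poincaré maps Q̄^i and Q^i of the linearized mosquito system,
acting on ℝ × C([−τ̄^i,0],ℝ) and ℝ × C([−τ_l^i(0),0],ℝ) respectively, have the
same spectral radius, and this common value is finite.
-/

/-- `(Ls, Sm)` is a solution of the linearized mosquito system whose
`S_m`-history lives on `[-r, 0]`. -/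
def IsLinMosqSol (μb μl μm τl τl' : ℝ → ℝ) (r : ℝ) (Ls Sm : ℝ → ℝ) : Prop :=
  ContinuousOn Ls (Set.Ici (0:ℝ)) ∧ ContinuousOn Sm (Set.Ici (-r)) ∧
  ∀ t > (0:ℝ),
    HasDerivAt Ls (μb t * Sm t - μl t * Ls t) t ∧
    HasDerivAt Sm
      ((1 - τl' t) * μb (t - τl t) * Real.exp (-(∫ u in (t - τl t)..t, μl u))
          * Sm (t - τl t) - μm t * Sm t) t

/-- `Q` is the Poincaré (period `w`) map of the linearized mosquito system on
the history space `ℝ × C([-r,0],ℝ)`. -/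
def IsPoincareMap (w : ℝ) (μb μl μm τl τl' : ℝ → ℝ) (r : ℝ)
    (Q : (ℝ × C(Set.Icc (-r) (0:ℝ), ℝ)) →L[ℝ] (ℝ × C(Set.Icc (-r) (0:ℝ), ℝ))) : Prop :=
  (∀ (v : ℝ × C(Set.Icc (-r) (0:ℝ), ℝ)) (Ls Sm : ℝ → ℝ),
    IsLinMosqSol μb μl μm τl τl' r Ls Sm →
    Ls 0 = v.1 → (∀ θ : Set.Icc (-r) (0:ℝ), Sm (θ : ℝ) = v.2 θ) →
    (Q v).1 = Ls w ∧ ∀ θ : Set.Icc (-r) (0:ℝ), (Q v).2 θ = Sm (w + (θ : ℝ))) ∧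
  (∀ v : ℝ × C(Set.Icc (-r) (0:ℝ), ℝ),
    ∃ Ls Sm : ℝ → ℝ, IsLinMosqSol μb μl μm τl τl' r Ls Sm ∧
      Ls 0 = v.1 ∧ ∀ θ : Set.Icc (-r) (0:ℝ), Sm (θ : ℝ) = v.2 θ)

/-- Auxiliary: nonzero elements of the spectrum of `A ∘ B` lie in that of `B ∘ A`. -/
lemma spectrum_comp_swap {X Y : Type*} [NormedAddCommGroup X] [NormedSpace ℝ X]
    [NormedAddCommGroup Y] [NormedSpace ℝ Y]
    (A : X →L[ℝ] Y) (B : Y →L[ℝ] X) {k : ℝ} (hk : k ≠ 0)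
    (h : k ∈ spectrum ℝ (A.comp B)) : k ∈ spectrum ℝ (B.comp A) := by
  by_contra hns
  rw [spectrum.notMem_iff] at hns
  apply (spectrum.notMem_iff.mpr ?_) h
  obtain ⟨u, hu⟩ := hns
  set R : X →L[ℝ] X := ↑u⁻¹ with hR
  have hR1 : ∀ x : X, R (k • x - B (A x)) = x := by
    intro x
    have := congrArg (fun (T : X →L[ℝ] X) => T x) u.inv_mul
    simpa [hu, hR, ContinuousLinearMap.mul_apply, Algebra.algebraMap_eq_smul_one,
      ContinuousLinearMap.sub_apply, ContinuousLinearMap.smul_apply] using this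
  have hR2 : ∀ x : X, k • R x - B (A (R x)) = x := by
    intro x
    have := congrArg (fun (T : X →L[ℝ] X) => T x) u.mul_inv
    simpa [hu, hR, ContinuousLinearMap.mul_apply, Algebra.algebraMap_eq_smul_one,
      ContinuousLinearMap.sub_apply, ContinuousLinearMap.smul_apply] using this
  set T : Y →L[ℝ] Y := algebraMap ℝ _ k - A.comp B with hT
  set S : Y →L[ℝ] Y := k⁻¹ • (1 + A.comp (R.comp B)) with hS
  have hTy : ∀ y, T y = k • y - A (B y) := by
    intro y
    simp [hT, Algebra.algebraMap_eq_smul_one, ContinuousLinearMap.sub_apply,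
      ContinuousLinearMap.smul_apply]
  have hSy : ∀ y, S y = k⁻¹ • (y + A (R (B y))) := by
    intro y
    simp [hS, ContinuousLinearMap.smul_apply, ContinuousLinearMap.add_apply]
  refine ⟨⟨T, S, ?_, ?_⟩, rfl⟩
  · ext y
    show T (S y) = y
    have hz : B (A (R (B y))) = k • R (B y) - B y := by
      have := hR2 (B y)
      linear_combination (norm := module) - this
    rw [hSy, hTy]
    simp only [_root_.map_add, _root_.map_smul, hz, _root_.map_sub, smul_sub, smul_add]
    match_scalars <;> field_simp <;> ring
  · ext y
    show S (T y) = y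
    rw [hTy, hSy]
    have hb : B (k • y - A (B y)) = k • B y - B (A (B y)) := by
      simp [_root_.map_sub, _root_.map_smul]
    rw [hb, hR1 (B y)]
    match_scalars <;> field_simp <;> ring

lemma sup_nnnorm_diff_zero (s s' : Set ℝ) (h : s \ {0} = s' \ {0}) :
    (⨆ k ∈ s, (‖k‖₊ : ENNReal)) = ⨆ k ∈ s', (‖k‖₊ : ENNReal) := by
  have key : ∀ u : Set ℝ, (⨆ k ∈ u, (‖k‖₊ : ENNReal)) = ⨆ k ∈ u \ {0}, (‖k‖₊ : ENNReal) := by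
    intro u
    apply le_antisymm
    · refine iSup₂_le fun k hk => ?_
      rcases eq_or_ne k 0 with rfl | hk0
      · simp
      · exact le_iSup₂ (f := fun k _ => (‖k‖₊ : ENNReal)) k ⟨hk, hk0⟩
    · exact iSup₂_le fun k hk => le_iSup₂ (f := fun k _ => (‖k‖₊ : ENNReal)) k hk.1
  rw [key s, key s', h]

/-- Precomposition with a continuous map, as a continuous linear map on `C(·,ℝ)`. -/
noncomputable def precompCLM {α β : Type*} [TopologicalSpace α] [TopologicalSpace β]
    [CompactSpace α] [CompactSpace β] (g : C(α, β)) : C(β, ℝ) →L[ℝ] C(α, ℝ) :=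
  LinearMap.mkContinuous
    { toFun := fun f => f.comp g
      map_add' := fun f₁ f₂ => rfl
      map_smul' := fun c f => rfl } 1
    (fun f => by
      rw [one_mul]
      refine (ContinuousMap.norm_le _ (norm_nonneg f)).mpr fun x => ?_
      exact f.norm_coe_le_norm (g x))

@[simp] lemma precompCLM_apply {α β : Type*} [TopologicalSpace α] [TopologicalSpace β]
    [CompactSpace α] [CompactSpace β] (g : C(α, β)) (f : C(β, ℝ)) (x : α) :
    precompCLM g f x = f (g x) := rfl

theorem poincare_maps_same_spectral_radius
    (w : ℝ) (hw : 0 < w)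
    (μb μl μm K : ℝ → ℝ)
    (hμb : Continuous μb ∧ (∀ t, 0 < μb t) ∧ Function.Periodic μb w)
    (hμl : Continuous μl ∧ (∀ t, 0 < μl t) ∧ Function.Periodic μl w)
    (hμm : Continuous μm ∧ (∀ t, 0 < μm t) ∧ Function.Periodic μm w)
    (hK : Continuous K ∧ (∀ t, 0 < K t) ∧ Function.Periodic K w)
    (τl τl' : ℝ → ℝ)
    (hτl : (∀ t, HasDerivAt τl (τl' t) t) ∧ Continuous τl' ∧
      (∀ t, 0 < τl t) ∧ Function.Periodic τl w ∧ (∀ t, τl' t < 1))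
    (τbar : ℝ) (hτbar : τbar = sSup (τl '' Set.Icc 0 w))
    (Qbar : (ℝ × C(Set.Icc (-τbar) (0:ℝ), ℝ)) →L[ℝ] (ℝ × C(Set.Icc (-τbar) (0:ℝ), ℝ)))
    (hQbar : IsPoincareMap w μb μl μm τl τl' τbar Qbar)
    (Q : (ℝ × C(Set.Icc (-(τl 0)) (0:ℝ), ℝ)) →L[ℝ] (ℝ × C(Set.Icc (-(τl 0)) (0:ℝ), ℝ)))
    (hQ : IsPoincareMap w μb μl μm τl τl' (τl 0) Q) :
    spectralRadius ℝ Qbar = spectralRadius ℝ Q ∧ spectralRadius ℝ Q ≠ ⊤ := by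
  obtain ⟨hτd, hτ'c, hτpos, hτper, hτ'lt⟩ := hτl
  have hτcont : Continuous τl :=
    continuous_iff_continuousAt.mpr fun t => (hτd t).differentiableAt.continuousAt
  -- the lag function g t = t - τl t is strictly monotone
  have hstrict : StrictMono (fun t => t - τl t) := by
    apply strictMono_of_deriv_pos
    intro t
    have hd : HasDerivAt (fun t => t - τl t) (1 - τl' t) t := (hasDerivAt_id t).sub (hτd t)
    rw [hd.deriv]
    linarith [hτ'lt t]
  have h01 : τl 0 ≤ τbar := by
    rw [hτbar]
    exact le_csSup ((isCompact_Icc.image hτcont).bddAbove) ⟨0, ⟨le_refl 0, hw.le⟩, rfl⟩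
  have h1w : τbar ≤ w + τl 0 := by
    rw [hτbar]
    refine csSup_le (⟨τl 0, ⟨0, ⟨le_refl 0, hw.le⟩, rfl⟩⟩) ?_
    rintro y ⟨t, ⟨ht0, htw⟩, rfl⟩
    have := hstrict.monotone ht0
    linarith
  have hτ0pos := hτpos 0
  have hτbarpos : 0 < τbar := lt_of_lt_of_le hτ0pos h01
  -- restriction / extension maps between history spaces
  set incl : C(Set.Icc (-(τl 0)) (0:ℝ), Set.Icc (-τbar) (0:ℝ)) :=
    ⟨fun θ => ⟨(θ : ℝ), ⟨le_trans (neg_le_neg h01) θ.2.1, θ.2.2⟩⟩,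
      Continuous.subtype_mk continuous_subtype_val _⟩ with hincl
  set projm : C(Set.Icc (-τbar) (0:ℝ), Set.Icc (-(τl 0)) (0:ℝ)) :=
    ⟨fun θ => ⟨max (θ : ℝ) (-(τl 0)), ⟨le_max_right _ _, max_le θ.2.2 (by linarith)⟩⟩,
      Continuous.subtype_mk (continuous_subtype_val.max continuous_const) _⟩ with hprojm
  set ρ : (ℝ × C(Set.Icc (-τbar) (0:ℝ), ℝ)) →L[ℝ] (ℝ × C(Set.Icc (-(τl 0)) (0:ℝ), ℝ)) :=
    (ContinuousLinearMap.id ℝ ℝ).prodMap (precompCLM incl) with hρ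
  set E : (ℝ × C(Set.Icc (-(τl 0)) (0:ℝ), ℝ)) →L[ℝ] (ℝ × C(Set.Icc (-τbar) (0:ℝ), ℝ)) :=
    (ContinuousLinearMap.id ℝ ℝ).prodMap (precompCLM projm) with hE
  have hρE : ∀ v, ρ (E v) = v := by
    intro v
    refine Prod.ext rfl (ContinuousMap.ext fun θ => ?_)
    show v.2 (projm (incl θ)) = v.2 θ
    congr 1
    exact Subtype.ext (max_eq_left θ.2.1)
  -- (a)  Q ∘ ρ = ρ ∘ Qbar
  have hcomm : ∀ v, Q (ρ v) = ρ (Qbar v) := by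
    intro v
    obtain ⟨Ls, Sm, hsol, h0, hhist⟩ := hQbar.2 v
    have hsol0 : IsLinMosqSol μb μl μm τl τl' (τl 0) Ls Sm :=
      ⟨hsol.1, hsol.2.1.mono (Set.Ici_subset_Ici.mpr (by linarith)), hsol.2.2⟩
    have hist0 : ∀ θ : Set.Icc (-(τl 0)) (0:ℝ), Sm (θ : ℝ) = (ρ v).2 θ := by
      intro θ
      exact hhist (incl θ)
    obtain ⟨hq1, hq2⟩ := hQ.1 (ρ v) Ls Sm hsol0 h0 hist0
    obtain ⟨hb1, hb2⟩ := hQbar.1 v Ls Sm hsol h0 hhist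
    refine Prod.ext ?_ (ContinuousMap.ext fun θ => ?_)
    · rw [hq1]; exact hb1.symm
    · rw [hq2 θ]
      show _ = (Qbar v).2 (incl θ)
      rw [hb2 (incl θ)]
      rfl
  -- (b)  Qbar ∘ E ∘ ρ = Qbar
  have habs : ∀ u, Qbar (E (ρ u)) = Qbar u := by
    intro u
    obtain ⟨Ls, Sm, hsol, h0, hhist⟩ := hQbar.2 u
    set Sm' : ℝ → ℝ := fun t => Sm (max t (-(τl 0))) with hSm'
    have hg : ∀ t : ℝ, 0 < t → -(τl 0) < t - τl t := by
      intro t ht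
      have := hstrict ht
      simp only at this
      linarith
    have hsol' : IsLinMosqSol μb μl μm τl τl' τbar Ls Sm' := by
      refine ⟨hsol.1, ?_, ?_⟩
      · refine hsol.2.1.comp ((continuous_id.max continuous_const).continuousOn) ?_
        intro t _
        exact le_trans (by linarith : -τbar ≤ -(τl 0)) (le_max_right _ _)
      · intro t ht
        have heq : Sm' =ᶠ[nhds t] Sm := by
          filter_upwards [eventually_gt_nhds (show -(τl 0) < t by linarith)] with s hs
          simp only [hSm', max_eq_left hs.le]
        have hS't : Sm' t = Sm t := by simp only [hSm', max_eq_left (by linarith : -(τl 0) ≤ t)]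
        have hS'g : Sm' (t - τl t) = Sm (t - τl t) := by
          simp only [hSm', max_eq_left (hg t ht).le]
        refine ⟨?_, ?_⟩
        · have := (hsol.2.2 t ht).1
          rwa [← hS't] at this
        · have := (hsol.2.2 t ht).2
          have h2 := this.congr_of_eventuallyEq heq
          rwa [← hS't, ← hS'g] at h2
    have hist' : ∀ θ : Set.Icc (-τbar) (0:ℝ), Sm' (θ : ℝ) = (E (ρ u)).2 θ := by
      intro θ
      exact hhist (incl (projm θ))
    obtain ⟨he1, he2⟩ := hQbar.1 (E (ρ u)) Ls Sm' hsol' h0 hist'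
    obtain ⟨hb1, hb2⟩ := hQbar.1 u Ls Sm hsol h0 hhist
    refine Prod.ext ?_ (ContinuousMap.ext fun θ => ?_)
    · rw [he1]; exact hb1.symm
    · rw [he2 θ, hb2 θ]
      simp only [hSm']
      rw [max_eq_left]
      have := θ.2.1
      linarith
  -- assemble: Q = ρ ∘ (Qbar ∘ E),  Qbar = (Qbar ∘ E) ∘ ρ
  set A := Qbar.comp E with hA
  set B := ρ with hB
  have hQeq : Q = B.comp A := by
    refine ContinuousLinearMap.ext fun v => ?_
    have := hcomm (E v)
    rw [hρE v] at this
    simpa [hA] using this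
  have hQbareq : Qbar = A.comp B := by
    refine ContinuousLinearMap.ext fun u => ?_
    have := habs u
    simpa [hA] using this.symm
  have hspec : spectrum ℝ Qbar \ {0} = spectrum ℝ Q \ {0} := by
    ext k
    simp only [Set.mem_diff, Set.mem_singleton_iff]
    constructor
    · rintro ⟨hk, hk0⟩
      refine ⟨?_, hk0⟩
      rw [hQeq]
      rw [hQbareq] at hk
      exact spectrum_comp_swap A B hk0 hk
    · rintro ⟨hk, hk0⟩
      refine ⟨?_, hk0⟩
      rw [hQbareq]
      rw [hQeq] at hk
      exact spectrum_comp_swap B A hk0 hk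
  constructor
  · exact sup_nnnorm_diff_zero (spectrum ℝ Qbar) (spectrum ℝ Q) hspec
  · have hle := spectrum.spectralRadius_le_nnnorm (𝕜 := ℝ) Q
    exact ne_top_of_le_ne_top ENNReal.coe_ne_top hle
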